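/- Let A be an irreducible central hyperplane arrangement in K^ℓ. Then the degree-1 graded piece of D(A) is spanned over K by the Euler derivation θ_E = Σ_{i=1}^ℓ x_i ∂_{x_i}; i.e., every derivation θ ∈ D(A) with linear coefficient functions is a scalar multiple of θ_E. -/

import Mathlib

open scoped Classical
open MvPolynomial

namespace ArrPaper

variable {K : Type*} [Field K] {ℓ : ℕ}

/-- The coordinate ring `S = K[x₁,…,x_ℓ]`. -/
noncomputable abbrev S (K : Type*) [Field K] (ℓ : ℕ) := MvPolynomial (Fin ℓ) K

/-- The linear form associated to a covector `c`. -/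
noncomputable def linForm (c : Fin ℓ → K) : S K ℓ :=
  ∑ i, MvPolynomial.C (c i) * MvPolynomial.X i

/-- The linear functional associated to a covector. -/
noncomputable def toFunc (c : Fin ℓ → K) : (Fin ℓ → K) →ₗ[K] K :=
  ∑ i, c i • LinearMap.proj i

/-- A (central) hyperplane arrangement, given by a finite set of nonzero,
pairwise non-proportional covectors (defining linear forms). -/
structure Arrangement (K : Type*) [Field K] (ℓ : ℕ) where
  hyps : Finset (Fin ℓ → K)
  ne_zero : ∀ c ∈ hyps, c ≠ 0
  nonparallel : ∀ c ∈ hyps, ∀ c' ∈ hyps, c ≠ c' → ∀ t : K, c' ≠ t • c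

/-- Derivations of the polynomial ring `S`. -/
abbrev Der (K : Type*) [Field K] (ℓ : ℕ) := Derivation K (S K ℓ) (S K ℓ)

/-- `θ` is a logarithmic derivation of the multiarrangement `(A, m)`, i.e.
`θ(α_H) ∈ α_H^{m(H)}·S` for all `H ∈ A`. -/
def IsLogDer (A : Arrangement K ℓ) (m : (Fin ℓ → K) → ℕ) (θ : Der K ℓ) : Prop :=
  ∀ c ∈ A.hyps, (linForm c) ^ (m c) ∣ θ (linForm c)

/-- `θ` is homogeneous of polynomial degree `d`: `θ(α)` is homogeneous of degree `d`
for every linear form `α`. -/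
def IsHomogOfDeg (θ : Der K ℓ) (d : ℕ) : Prop :=
  ∀ c : Fin ℓ → K, (θ (linForm c)).IsHomogeneous d

/-- `θ₁, …, θ_ℓ` form a basis of the `S`-module `D(A,m)`. -/
def IsDerBasis (A : Arrangement K ℓ) (m : (Fin ℓ → K) → ℕ) (θ : Fin ℓ → Der K ℓ) : Prop :=
  (∀ i, IsLogDer A m (θ i)) ∧
  ∀ η : Der K ℓ, IsLogDer A m η → ∃! f : Fin ℓ → S K ℓ, η = ∑ i, f i • θ i

/-- `(A,m)` is free with a homogeneous basis of degrees (exponents) `d`. -/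
def IsFreeWithExp (A : Arrangement K ℓ) (m : (Fin ℓ → K) → ℕ) (d : Fin ℓ → ℕ) : Prop :=
  ∃ θ : Fin ℓ → Der K ℓ, (∀ i, IsHomogOfDeg (θ i) (d i)) ∧ IsDerBasis A m θ

/-- `(A,m)` is a free multiarrangement. -/
def IsFree (A : Arrangement K ℓ) (m : (Fin ℓ → K) → ℕ) : Prop :=
  ∃ d : Fin ℓ → ℕ, IsFreeWithExp A m d

/-- `|m|`, the total multiplicity. -/
def msum (A : Arrangement K ℓ) (m : (Fin ℓ → K) → ℕ) : ℕ := ∑ c ∈ A.hyps, m c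

/-- The rank of an arrangement: the dimension of the span of its covectors. -/
noncomputable def rank (A : Arrangement K ℓ) : ℕ :=
  Module.finrank K (Submodule.span K (A.hyps : Set (Fin ℓ → K)))

/-- `A` is reducible: after a linear change of coordinates it is a product of two
arrangements in complementary (nonzero) subspaces.  In terms of covectors: the
covectors split between two complementary nonzero subspaces of the dual space. -/
def Reducible (A : Arrangement K ℓ) : Prop :=
  ∃ W₁ W₂ : Submodule K (Fin ℓ → K), W₁ ≠ ⊥ ∧ W₂ ≠ ⊥ ∧ W₁ ⊓ W₂ = ⊥ ∧ W₁ ⊔ W₂ = ⊤ ∧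
    ∀ c ∈ A.hyps, c ∈ W₁ ∨ c ∈ W₂

/-- The hyperplanes of the localization at a flat; the flat of codimension `r` is
encoded by the `r`-dimensional subspace `U` of the dual space spanned by the
covectors of the hyperplanes containing it. -/
noncomputable def locHyps (A : Arrangement K ℓ) (U : Submodule K (Fin ℓ → K)) :
    Finset (Fin ℓ → K) :=
  A.hyps.filter (· ∈ U)

/-- `U` encodes a flat of `A` of codimension `r` (an element of `L_r(A)`). -/
def IsFlatOfRank (A : Arrangement K ℓ) (U : Submodule K (Fin ℓ → K)) (r : ℕ) : Prop :=
  Module.finrank K U = r ∧ Submodule.span K (locHyps A U : Set (Fin ℓ → K)) = U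

/-- The localization `A_X` of `A` at the flat encoded by `U`. -/
noncomputable def localize (A : Arrangement K ℓ) (U : Submodule K (Fin ℓ → K)) :
    Arrangement K ℓ where
  hyps := locHyps A U
  ne_zero := fun c hc => A.ne_zero c (Finset.mem_filter.mp hc).1
  nonparallel := fun c hc c' hc' =>
    A.nonparallel c (Finset.mem_filter.mp hc).1 c' (Finset.mem_filter.mp hc').1

/-- `H₀` (given by covector `c₀`) is a heavy hyperplane of `(A,m)`. -/
def IsHeavy (A : Arrangement K ℓ) (m : (Fin ℓ → K) → ℕ) (c₀ : Fin ℓ → K) : Prop :=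
  c₀ ∈ A.hyps ∧ (∑ c ∈ A.hyps.erase c₀, m c) ≤ m c₀

/-- `H₀` (given by covector `c₀`) is a locally heavy hyperplane of `(A,m)`. -/
def IsLocallyHeavy (A : Arrangement K ℓ) (m : (Fin ℓ → K) → ℕ) (c₀ : Fin ℓ → K) : Prop :=
  c₀ ∈ A.hyps ∧ ∀ U : Submodule K (Fin ℓ → K), IsFlatOfRank A U 2 → c₀ ∈ U →
    3 ≤ (locHyps A U).card → (∑ c ∈ (locHyps A U).erase c₀, m c) ≤ m c₀

/-- `b` is the second Betti number of the rank-2 localization of `(A,m)` at `U`: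
the product of the nonzero exponents of this free rank-2 multiarrangement. -/
def IsLocalB2 (A : Arrangement K ℓ) (m : (Fin ℓ → K) → ℕ)
    (U : Submodule K (Fin ℓ → K)) (b : ℕ) : Prop :=
  ∃ d : Fin ℓ → ℕ, IsFreeWithExp (localize A U) m d ∧
    b = ∏ i ∈ Finset.univ.filter (fun i => d i ≠ 0), d i

/-- `b` is the second Betti number `b₂(A,m)` of the multiarrangement `(A,m)`. -/
def IsB2 (A : Arrangement K ℓ) (m : (Fin ℓ → K) → ℕ) (b : ℕ) : Prop :=
  ∃ bloc : Submodule K (Fin ℓ → K) → ℕ,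
    (∀ U, IsFlatOfRank A U 2 → IsLocalB2 A m U (bloc U)) ∧
    b = ∑ᶠ U ∈ {U : Submodule K (Fin ℓ → K) | IsFlatOfRank A U 2}, bloc U

/-- The second Betti number of a simple arrangement:
`b₂(A) = Σ_{X ∈ L₂(A)} (|A_X| - 1)`. -/
noncomputable def b2Simple (A : Arrangement K ℓ) : ℕ :=
  ∑ᶠ U ∈ {U : Submodule K (Fin ℓ → K) | IsFlatOfRank A U 2}, ((locHyps A U).card - 1)

/-- The Euler–Ziegler multiplicity of the restricted hyperplane `H₀ ∩ ker(c)` of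
`A^{H₀}`: `m^{H₀}(X) = |m_X| - m(H₀)`. -/
noncomputable def EZmult (A : Arrangement K ℓ) (m : (Fin ℓ → K) → ℕ)
    (c₀ c : Fin ℓ → K) : ℕ :=
  (∑ c' ∈ A.hyps.filter (· ∈ Submodule.span K ({c₀, c} : Set (Fin ℓ → K))), m c') - m c₀

/-- Two covectors are parallel (define the same hyperplane). -/
def Parallel {n : ℕ} (b b' : Fin n → K) : Prop := ∃ t : K, t ≠ 0 ∧ b' = t • b

/-- The covector on `K^n` obtained by restricting the covector `c` on `K^{n+1}` to the
hyperplane `ker c₀`, transported by the linear isomorphism `e : ker c₀ ≃ K^n`. -/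
noncomputable def resCov {n : ℕ} (c₀ : Fin (n+1) → K)
    (e : ↥(LinearMap.ker (toFunc c₀)) ≃ₗ[K] (Fin n → K)) (c : Fin (n+1) → K) :
    Fin n → K :=
  fun j => toFunc c ((e.symm (Pi.single j 1) : ↥(LinearMap.ker (toFunc c₀))) : Fin (n+1) → K)

/-- `(B, mB)` is (a model, in coordinates, of) the Euler–Ziegler restriction
`(A^{H₀}, m^{H₀})` of `(A,m)` to the hyperplane `H₀ = ker c₀ ∈ A`. -/
def IsEZRes {n : ℕ} (A : Arrangement K (n+1)) (m : (Fin (n+1) → K) → ℕ)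
    (c₀ : Fin (n+1) → K) (B : Arrangement K n) (mB : (Fin n → K) → ℕ) : Prop :=
  c₀ ∈ A.hyps ∧
  ∃ e : ↥(LinearMap.ker (toFunc c₀)) ≃ₗ[K] (Fin n → K),
    (∀ c ∈ A.hyps.erase c₀, ∃ b ∈ B.hyps,
        Parallel b (resCov c₀ e c) ∧ mB b = EZmult A m c₀ c) ∧
    (∀ b ∈ B.hyps, ∃ c ∈ A.hyps.erase c₀, Parallel b (resCov c₀ e c))

/-- A combinatorial equivalence between two arrangements: a bijection between the
hyperplanes inducing an isomorphism of intersection lattices (it preserves the rank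
of every subset of hyperplanes). -/
def CombEquiv (A A' : Arrangement K ℓ) : Prop :=
  ∃ φ : (Fin ℓ → K) → (Fin ℓ → K), Set.BijOn φ ↑A.hyps ↑A'.hyps ∧
    ∀ T : Finset (Fin ℓ → K), T ⊆ A.hyps →
      Module.finrank K (Submodule.span K (T : Set (Fin ℓ → K))) =
      Module.finrank K (Submodule.span K ((T.image φ) : Set (Fin ℓ → K)))

/-- The Euler derivation `θ_E = Σ xᵢ ∂_{xᵢ}`. -/
noncomputable def eulerDer (K : Type*) [Field K] (ℓ : ℕ) : Der K ℓ :=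
  MvPolynomial.mkDerivation K (fun i => (MvPolynomial.X i : S K ℓ))


lemma degree_eq_one (d : Fin ℓ →₀ ℕ) (hd : d.degree = 1) : ∃ j, d = Finsupp.single j 1 := by
  have hne : d ≠ 0 := by
    intro h; rw [h, map_zero] at hd; exact one_ne_zero hd.symm
  obtain ⟨j, hj⟩ := Finsupp.ne_iff.mp hne
  simp only [Finsupp.coe_zero, Pi.zero_apply] at hj
  have hjm : j ∈ d.support := Finsupp.mem_support_iff.mpr hj
  have hcard : d.support.card ≤ 1 := by
    calc d.support.card = ∑ i ∈ d.support, 1 := by simp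
    _ ≤ ∑ i ∈ d.support, d i := Finset.sum_le_sum (fun i hi => Nat.one_le_iff_ne_zero.mpr (Finsupp.mem_support_iff.mp hi))
    _ = 1 := hd
  have hsupp : d.support = {j} := by
    apply Finset.eq_singleton_iff_unique_mem.mpr
    refine ⟨hjm, fun x hx => ?_⟩
    by_contra hxj
    have : 2 ≤ d.support.card := Finset.one_lt_card.mpr ⟨x, hx, j, hjm, hxj⟩
    omega
  have hdj : d j = 1 := by
    have := hd; rw [Finsupp.degree_apply, hsupp] at this; simpa using this
  exact ⟨j, Finsupp.eq_single_iff.mpr ⟨by rw [hsupp], hdj⟩⟩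

lemma coeff_linForm (c : Fin ℓ → K) (j : Fin ℓ) :
    (linForm c).coeff (Finsupp.single j 1) = c j := by
  rw [linForm, MvPolynomial.coeff_sum]
  rw [Finset.sum_eq_single j]
  · simp [MvPolynomial.coeff_C_mul, MvPolynomial.coeff_X]
  · intro i _ hij
    simp [MvPolynomial.coeff_C_mul, MvPolynomial.coeff_X', Finsupp.single_eq_single_iff, hij]
  · simp

lemma eq_linForm_of_homog1 {p : S K ℓ} (hp : p.IsHomogeneous 1) :
    p = linForm (fun j => p.coeff (Finsupp.single j 1)) := by
  apply MvPolynomial.ext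
  intro d
  by_cases h : ∃ j, d = Finsupp.single j 1
  · obtain ⟨j, rfl⟩ := h
    rw [coeff_linForm]
  · have h1 : p.coeff d = 0 := by
      by_contra hc
      exact h (degree_eq_one d (by rw [Finsupp.degree_eq_weight_one]; exact hp hc))
    have h2 : (linForm (fun j => p.coeff (Finsupp.single j 1))).coeff d = 0 := by
      by_contra hc
      have : IsHomogeneous (linForm (fun j => p.coeff (Finsupp.single j 1))) 1 := by
        apply MvPolynomial.IsHomogeneous.sum
        intro i _
        have := (MvPolynomial.isHomogeneous_X K (σ := Fin ℓ) i).C_mul (p.coeff (Finsupp.single i 1))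
        simpa using this
      exact h (degree_eq_one d (by rw [Finsupp.degree_eq_weight_one]; exact this hc))
    rw [h1, h2]

lemma linForm_single (i : Fin ℓ) : linForm (Pi.single i (1:K)) = MvPolynomial.X i := by
  rw [linForm, Finset.sum_eq_single i]
  · simp
  · intro j _ hji; simp [Pi.single_eq_of_ne hji]
  · simp

lemma linForm_add (c c' : Fin ℓ → K) : linForm (c + c') = linForm c + linForm c' := by
  simp [linForm, add_mul, Finset.sum_add_distrib]

lemma linForm_smul (s : K) (c : Fin ℓ → K) :
    linForm (s • c) = MvPolynomial.C s * linForm c := by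
  simp [linForm, Finset.mul_sum, mul_assoc]

lemma dvd_homog1 {p : S K ℓ} (c : Fin ℓ → K) (hp : p.IsHomogeneous 1)
    (hdvd : linForm c ∣ p) : ∃ t : K, p = MvPolynomial.C t * linForm c := by
  obtain ⟨q, hq⟩ := hdvd
  refine ⟨q.coeff 0, ?_⟩
  have key : ∀ j, p.coeff (Finsupp.single j 1) = c j * q.coeff 0 := by
    intro j
    rw [hq, linForm, Finset.sum_mul, MvPolynomial.coeff_sum]
    rw [Finset.sum_eq_single j]
    · rw [mul_assoc, MvPolynomial.coeff_C_mul, MvPolynomial.coeff_X_mul']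
      simp
    · intro i _ hij
      rw [mul_assoc, MvPolynomial.coeff_C_mul, MvPolynomial.coeff_X_mul']
      simp only [Finsupp.mem_support_iff, Finsupp.single_apply]
      simp [hij, Ne.symm hij]
    · simp
  calc p = linForm (fun j => p.coeff (Finsupp.single j 1)) := eq_linForm_of_homog1 hp
    _ = linForm ((q.coeff 0) • c) := by
        congr 1; funext j; rw [key j]; simp [mul_comm]
    _ = MvPolynomial.C (q.coeff 0) * linForm c := linForm_smul _ _

theorem stmt2 (A : Arrangement K ℓ) (hA : ¬ Reducible A) :
    ∀ θ : Der K ℓ, IsLogDer A (fun _ => 1) θ → IsHomogOfDeg θ 1 →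
      ∃ t : K, θ = MvPolynomial.C (σ := Fin ℓ) t • eulerDer K ℓ := by
  intro θ hlog hhom
  classical
  set a : (Fin ℓ → K) → (Fin ℓ → K) :=
    fun c j => (θ (linForm c)).coeff (Finsupp.single j 1) with ha
  have hθlin : ∀ c, θ (linForm c) = linForm (a c) := fun c => eq_linForm_of_homog1 (hhom c)
  have hadd : ∀ c c', a (c + c') = a c + a c' := by
    intro c c'; funext j
    simp [ha, linForm_add, map_add, MvPolynomial.coeff_add]
  have hsmul : ∀ (s : K) (c), a (s • c) = s • a c := by
    intro s c; funext j
    have h1 : θ (linForm (s • c)) = MvPolynomial.C s * θ (linForm c) := by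
      rw [linForm_smul, ← MvPolynomial.smul_eq_C_mul, Derivation.map_smul,
        MvPolynomial.smul_eq_C_mul]
    simp [ha, h1, MvPolynomial.coeff_C_mul]
  set T : Module.End K (Fin ℓ → K) :=
    { toFun := a, map_add' := hadd, map_smul' := hsmul } with hT
  have hex : ∀ c ∈ A.hyps, ∃ t : K, θ (linForm c) = MvPolynomial.C t * linForm c := by
    intro c hc
    have h := hlog c hc
    rw [pow_one] at h
    exact dvd_homog1 c (hhom c) h
  choose! t ht using hex
  have haT : ∀ c ∈ A.hyps, T c = t c • c := by
    intro c hc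
    funext j
    show a c j = (t c • c) j
    have h := congrArg (fun p : S K ℓ => p.coeff (Finsupp.single j 1)) (ht c hc)
    rw [ha]; simp only
    rw [h, MvPolynomial.coeff_C_mul, coeff_linForm]
    simp
  have hθX : ∀ i, θ (MvPolynomial.X i) = linForm (T (Pi.single i 1)) := by
    intro i
    rw [← linForm_single i, hθlin]
    rfl
  -- a helper to conclude from `T = τ • id` on basis vectors
  have conclude : ∀ τ : K, (∀ i : Fin ℓ, T (Pi.single i 1) = τ • (Pi.single i 1 : Fin ℓ → K)) →
      ∃ t : K, θ = MvPolynomial.C (σ := Fin ℓ) t • eulerDer K ℓ := by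
    intro τ hτ
    refine ⟨τ, MvPolynomial.derivation_ext fun i => ?_⟩
    rw [hθX i, hτ i, linForm_smul, linForm_single]
    simp [eulerDer, MvPolynomial.mkDerivation_X, MvPolynomial.smul_eq_C_mul]
  by_cases hspan : Submodule.span K (A.hyps : Set (Fin ℓ → K)) = ⊤
  · by_cases hconst : ∀ c ∈ A.hyps, ∀ c' ∈ A.hyps, t c = t c'
    · rcases Finset.eq_empty_or_nonempty A.hyps with he | ⟨c₀, hc₀⟩
      · -- empty arrangement spanning top: the space is trivial
        refine conclude 0 fun i => ?_
        exfalso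
        have hbot : (⊤ : Submodule K (Fin ℓ → K)) = ⊥ := by
          rw [← hspan, he]; simp
        have h0 : (Pi.single i 1 : Fin ℓ → K) = 0 := by
          have : (Pi.single i 1 : Fin ℓ → K) ∈ (⊥ : Submodule K (Fin ℓ → K)) := by
            rw [← hbot]; trivial
          simpa using this
        have := congrFun h0 i
        simp at this
      · have hTall : ∀ v ∈ Submodule.span K (A.hyps : Set (Fin ℓ → K)), T v = t c₀ • v := by
          intro v hv
          induction hv using Submodule.span_induction with
          | mem x hx => rw [haT x hx, hconst x hx c₀ hc₀]
          | zero => simp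
          | add x y _ _ hx hy => rw [map_add, hx, hy, smul_add]
          | smul s x _ hx => rw [map_smul, hx, smul_comm]
        refine conclude (t c₀) fun i => ?_
        exact hTall _ (by rw [hspan]; trivial)
    · exfalso; apply hA
      push_neg at hconst
      obtain ⟨c₁, hc₁, c₂, hc₂, hne⟩ := hconst
      refine ⟨Submodule.span K {x : Fin ℓ → K | x ∈ A.hyps ∧ t x = t c₁},
        Submodule.span K {x : Fin ℓ → K | x ∈ A.hyps ∧ t x ≠ t c₁}, ?_, ?_, ?_, ?_, ?_⟩
      · intro hbot
        have : c₁ ∈ (⊥ : Submodule K (Fin ℓ → K)) := by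
          rw [← hbot]; exact Submodule.subset_span ⟨hc₁, rfl⟩
        exact A.ne_zero c₁ hc₁ (by simpa using this)
      · intro hbot
        have : c₂ ∈ (⊥ : Submodule K (Fin ℓ → K)) := by
          rw [← hbot]; exact Submodule.subset_span ⟨hc₂, Ne.symm hne⟩
        exact A.ne_zero c₂ hc₂ (by simpa using this)
      · rw [← le_bot_iff]
        have h1 : Submodule.span K {x : Fin ℓ → K | x ∈ A.hyps ∧ t x = t c₁} ≤
            T.eigenspace (t c₁) := by
          rw [Submodule.span_le]
          rintro x ⟨hx, hxt⟩
          rw [SetLike.mem_coe, Module.End.mem_eigenspace_iff, ← hxt]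
          exact haT x hx
        have h2 : Submodule.span K {x : Fin ℓ → K | x ∈ A.hyps ∧ t x ≠ t c₁} ≤
            ⨆ (μ : K) (_ : μ ≠ t c₁), T.eigenspace μ := by
          rw [Submodule.span_le]
          rintro x ⟨hx, hxt⟩
          have hxe : x ∈ T.eigenspace (t x) := Module.End.mem_eigenspace_iff.mpr (haT x hx)
          exact le_iSup₂ (f := fun (μ : K) (_ : μ ≠ t c₁) => T.eigenspace μ) (t x) hxt hxe
        have hdis := Module.End.eigenspaces_iSupIndep T (t c₁)
        exact le_trans (inf_le_inf h1 h2) (hdis.mono_right le_rfl).le_bot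
      · rw [← Submodule.span_union]
        rw [eq_top_iff, ← hspan]
        apply Submodule.span_mono
        intro x hx
        by_cases hxt : t x = t c₁
        · exact Or.inl ⟨hx, hxt⟩
        · exact Or.inr ⟨hx, hxt⟩
      · intro c hc
        by_cases hct : t c = t c₁
        · exact Or.inl (Submodule.subset_span ⟨hc, hct⟩)
        · exact Or.inr (Submodule.subset_span ⟨hc, hct⟩)
  · -- the hyperplanes do not span
    rcases Finset.eq_empty_or_nonempty A.hyps with he | ⟨c₁, hc₁⟩
    · -- empty arrangement, not spanning: ℓ ≥ 1
      by_cases hl : ℓ = 1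
      · subst hl
        refine conclude (T (Pi.single 0 1) 0) fun i => ?_
        have hi : i = 0 := Subsingleton.elim i 0
        subst hi
        funext j
        have hj : j = 0 := Subsingleton.elim j 0
        subst hj
        simp
      · -- ℓ ≠ 1 and not spanning and empty: ℓ ≥ 2, reducible
        exfalso; apply hA
        have hl2 : 2 ≤ ℓ := by
          rcases Nat.lt_or_ge ℓ 2 with h | h
          · interval_cases ℓ
            · exfalso; apply hspan
              rw [eq_top_iff]
              intro x _
              have hx0 : x = 0 := Subsingleton.elim x 0
              rw [hx0]; exact Submodule.zero_mem _
            · exact absurd rfl hl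
          · exact h
        set v₀ : Fin ℓ → K := Pi.single ⟨0, by omega⟩ 1 with hv₀
        set v₁ : Fin ℓ → K := Pi.single ⟨1, by omega⟩ 1 with hv₁
        obtain ⟨W₂, hW₂⟩ := Submodule.exists_isCompl (Submodule.span K {v₀})
        refine ⟨Submodule.span K {v₀}, W₂, ?_, ?_, ?_, ?_, ?_⟩
        · intro hbot
          have : v₀ ∈ (⊥ : Submodule K (Fin ℓ → K)) := by
            rw [← hbot]; exact Submodule.mem_span_singleton_self v₀
          have h0 := congrFun (by simpa using this : v₀ = 0) ⟨0, by omega⟩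
          rw [hv₀] at h0; simp at h0
        · intro hbot
          have htop : Submodule.span K {v₀} = ⊤ := by
            have := hW₂.sup_eq_top
            rw [hbot, sup_bot_eq] at this; exact this
          have : v₁ ∈ Submodule.span K {v₀} := by rw [htop]; trivial
          obtain ⟨s, hs⟩ := Submodule.mem_span_singleton.mp this
          have h0 := congrFun hs ⟨0, by omega⟩
          have h1 := congrFun hs ⟨1, by omega⟩
          rw [hv₀, hv₁] at h0 h1
          have hne01 : (⟨1, by omega⟩ : Fin ℓ) ≠ ⟨0, by omega⟩ :=
            Fin.ne_of_val_ne one_ne_zero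
          simp [Pi.single_eq_of_ne hne01, Pi.single_eq_of_ne (Ne.symm hne01)] at h0 h1
        · exact hW₂.inf_eq_bot
        · exact hW₂.sup_eq_top
        · intro c hc; rw [he] at hc; exact absurd hc (Finset.notMem_empty c)
    · -- nonempty, not spanning: reducible
      exfalso; apply hA
      obtain ⟨W₂, hW₂⟩ := Submodule.exists_isCompl (Submodule.span K (A.hyps : Set (Fin ℓ → K)))
      refine ⟨Submodule.span K (A.hyps : Set (Fin ℓ → K)), W₂, ?_, ?_, hW₂.inf_eq_bot,
        hW₂.sup_eq_top, fun c hc => Or.inl (Submodule.subset_span hc)⟩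
      · intro hbot
        have : c₁ ∈ (⊥ : Submodule K (Fin ℓ → K)) := by
          rw [← hbot]; exact Submodule.subset_span hc₁
        exact A.ne_zero c₁ hc₁ (by simpa using this)
      · intro hbot
        apply hspan
        have := hW₂.sup_eq_top
        rw [hbot, sup_bot_eq] at this; exact this

end ArrPaper
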